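/- arXiv:2205.05505 — 7 statements merged into one kernel-verified Lean document; each statement's English description precedes it below -/
import Mathlib

section
/- The hypervolume improvement function y ↦ Δ⁺(y; Y, r) is continuous on ℝ^m restricted to the region {y : y ≤ r componentwise}. -/
open MeasureTheory

/-- The hypervolume indicator: Lebesgue measure of the union of boxes `[a, r]` for `a ∈ A`. -/
noncomputable def HV {m : ℕ} (A : Finset (Fin m → ℝ)) (r : Fin m → ℝ) : ℝ :=
  (volume (⋃ a ∈ A, Set.Icc a r)).toReal

/-- The hypervolume improvement `y ↦ Δ⁺(y; Y, r)` is continuous on the region `{y : y ≤ r}`. -/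
theorem hvi_continuousOn {m : ℕ} (Y : Finset (Fin m → ℝ)) (r : Fin m → ℝ)
    (hY : ∀ a ∈ Y, ∀ i, a i < r i) :
    ContinuousOn (fun y => HV (insert y Y) r - HV Y r) {y : Fin m → ℝ | y ≤ r} := by
  classical
  set S := {y : Fin m → ℝ | y ≤ r} with hSdef
  set U : Set (Fin m → ℝ) := ⋃ a ∈ Y, Set.Icc a r with hUdef
  have hboxfin : ∀ y : Fin m → ℝ, volume (Set.Icc y r) ≠ ⊤ := fun y =>
    (isCompact_Icc.measure_lt_top).ne
  have hUfin : volume U ≠ ⊤ := by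
    refine ne_top_of_le_ne_top ?_ (measure_biUnion_finset_le Y _)
    exact (ENNReal.sum_lt_top.2 fun a _ => isCompact_Icc.measure_lt_top).ne
  set F : (Fin m → ℝ) → ℝ := fun y => (volume (Set.Icc y r ∪ U)).toReal with hFdef
  have hFeq : ∀ y : Fin m → ℝ, HV (insert y Y) r = F y := by
    intro y
    simp only [HV, hFdef]
    congr 1
    rw [Finset.set_biUnion_insert]
  set g : (Fin m → ℝ) → ℝ := fun y => ∏ i, (r i - y i) with hgdef
  have hgeq : ∀ y : Fin m → ℝ, y ≤ r → (volume (Set.Icc y r)).toReal = g y := by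
    intro y hy
    exact Real.volume_Icc_pi_toReal hy
  have hFinU : ∀ y : Fin m → ℝ, volume (Set.Icc y r ∪ U) ≠ ⊤ := fun y => by
    refine ne_top_of_le_ne_top ?_ (measure_union_le _ _)
    exact ENNReal.add_ne_top.2 ⟨hboxfin y, hUfin⟩
  -- key inequality
  have key : ∀ y ∈ S, ∀ y' ∈ S, F y - F y' ≤ g y - g (y ⊔ y') := by
    intro y hy y' hy'
    have hsub : Set.Icc y r ∪ U ⊆ (Set.Icc y r \ Set.Icc y' r) ∪ (Set.Icc y' r ∪ U) := by
      intro x hx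
      by_cases hxB : x ∈ Set.Icc y' r
      · exact Or.inr (Or.inl hxB)
      · rcases hx with hx | hx
        · exact Or.inl ⟨hx, hxB⟩
        · exact Or.inr (Or.inr hx)
    have h1 : volume (Set.Icc y r ∪ U)
        ≤ volume (Set.Icc y r \ Set.Icc y' r) + volume (Set.Icc y' r ∪ U) :=
      (measure_mono hsub).trans (measure_union_le _ _)
    have hdiff_eq : Set.Icc y r \ Set.Icc y' r = Set.Icc y r \ Set.Icc (y ⊔ y') r := by
      rw [← Set.diff_self_inter, Set.Icc_inter_Icc, inf_idem]
    have hsubset : Set.Icc (y ⊔ y') r ⊆ Set.Icc y r := Set.Icc_subset_Icc_left le_sup_left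
    have hmd : volume (Set.Icc y r \ Set.Icc (y ⊔ y') r)
        = volume (Set.Icc y r) - volume (Set.Icc (y ⊔ y') r) :=
      measure_diff hsubset measurableSet_Icc.nullMeasurableSet (hboxfin _)
    have hdiffReal : (volume (Set.Icc y r \ Set.Icc y' r)).toReal = g y - g (y ⊔ y') := by
      rw [hdiff_eq, hmd, ENNReal.toReal_sub_of_le (measure_mono hsubset) (hboxfin _),
        hgeq y hy, hgeq (y ⊔ y') (sup_le hy hy')]
    have h2 : F y ≤ (volume (Set.Icc y r \ Set.Icc y' r)).toReal + F y' := by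
      have := ENNReal.toReal_mono
        (ENNReal.add_ne_top.2 ⟨ne_top_of_le_ne_top (hboxfin y)
          (measure_mono Set.diff_subset), hFinU y'⟩) h1
      rwa [ENNReal.toReal_add (ne_top_of_le_ne_top (hboxfin y)
        (measure_mono Set.diff_subset)) (hFinU y')] at this
    linarith [h2, hdiffReal]
  have gmono : ∀ y ∈ S, ∀ y' ∈ S, g (y ⊔ y') ≤ g y' := by
    intro y hy y' hy'
    rw [← hgeq _ hy', ← hgeq _ (sup_le hy hy')]
    exact ENNReal.toReal_mono (hboxfin _)
      (measure_mono (Set.Icc_subset_Icc_left le_sup_right))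
  -- continuity of auxiliary functions
  have hgcont : Continuous g := by
    exact continuous_finset_prod _ fun i _ => continuous_const.sub (continuous_apply i)
  -- main
  have hFcont : ContinuousOn F S := by
    intro y₀ hy₀
    set h : (Fin m → ℝ) → ℝ :=
      fun y => (g y - g (y ⊔ y₀)) + (g y₀ - g (y ⊔ y₀)) with hhdef
    have hsupc : Continuous fun y : Fin m → ℝ => y ⊔ y₀ :=
      continuous_pi fun i => (continuous_apply i).max continuous_const
    have hhcont : Continuous h :=
      ((hgcont.sub (hgcont.comp hsupc)).add (continuous_const.sub (hgcont.comp hsupc)))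
    have hh0 : h y₀ = 0 := by simp [hhdef]
    have hhtend : Filter.Tendsto h (nhdsWithin y₀ S) (nhds 0) := by
      have := (hhcont.tendsto y₀).mono_left (nhdsWithin_le_nhds (s := S))
      rwa [hh0] at this
    have hbound : ∀ y ∈ S, |F y - F y₀| ≤ h y := by
      intro y hy
      rw [abs_sub_le_iff]
      constructor
      · have h1 := key y hy y₀ hy₀
        have h2 := gmono y hy y₀ hy₀
        simp only [hhdef]
        linarith
      · have h1 := key y₀ hy₀ y hy
        have h2 := gmono y₀ hy₀ y hy
        rw [sup_comm] at h1 h2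
        simp only [hhdef]
        linarith
    have habs : Filter.Tendsto (fun y => |F y - F y₀|) (nhdsWithin y₀ S) (nhds 0) := by
      refine squeeze_zero' (Filter.Eventually.of_forall fun y => abs_nonneg _) ?_ hhtend
      exact eventually_mem_nhdsWithin.mono hbound
    rw [ContinuousWithinAt, tendsto_iff_dist_tendsto_zero]
    simpa [Real.dist_eq] using habs
  have : (fun y => HV (insert y Y) r - HV Y r) = fun y => F y - HV Y r := by
    funext y; rw [hFeq]
  rw [this]
  exact hFcont.sub continuousOn_const
end

section
/- In ℝ², if y lies in the non-dominated region of P and strictly dominates no point of P (i.e., y is in a cell C(i,j) with i + j ≤ n whose interior dominates no point of P), and q^{(a)}, q^{(b)} are the neighboring Pareto points with q₁^{(a)} ≤ y₁ < q₁^{(b)} where q₂^{(b)} ≤ y₂ < q₂^{(a)}, then Δ⁺(y; P, r) = (q₁^{(b)} − y₁)(q₂^{(a)} − y₂). -/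
open MeasureTheory

/-- The 2-D hypervolume indicator. -/
noncomputable def HV2 (A : Finset (ℝ × ℝ)) (r : ℝ × ℝ) : ℝ :=
  (volume (⋃ a ∈ A, Set.Icc a r)).toReal

/-- If `y` lies in the non-dominated region between neighboring Pareto points `q⁽ᵃ⁾` and
`q⁽ᵇ⁾` (with `q₁⁽ᵃ⁾ ≤ y₁ < q₁⁽ᵇ⁾` and `q₂⁽ᵇ⁾ ≤ y₂ < q₂⁽ᵃ⁾`), then
`Δ⁺(y; P, r) = (q₁⁽ᵇ⁾ − y₁)(q₂⁽ᵃ⁾ − y₂)`. -/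
theorem hvi2_cell_formula {n : ℕ} (q1 q2 : Fin n → ℝ) (r y : ℝ × ℝ)
    (h1 : StrictMono q1) (h2 : StrictAnti q2)
    (hr : ∀ k, q1 k < r.1 ∧ q2 k < r.2)
    (a b : Fin n) (hab : (b : ℕ) = (a : ℕ) + 1)
    (ha1 : q1 a ≤ y.1) (hb1 : y.1 < q1 b)
    (hb2 : q2 b ≤ y.2) (ha2 : y.2 < q2 a) :
    HV2 (insert y (Finset.univ.image fun k => (q1 k, q2 k))) r -
        HV2 (Finset.univ.image fun k => (q1 k, q2 k)) r =
      (q1 b - y.1) * (q2 a - y.2) := by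
  classical
  set U : Set (ℝ × ℝ) := ⋃ k : Fin n, Set.Icc (q1 k, q2 k) r with hUdef
  set S : Set (ℝ × ℝ) := Set.Ico y.1 (q1 b) ×ˢ Set.Ico y.2 (q2 a) with hSdef
  have hPU : (⋃ p ∈ (Finset.univ.image fun k => (q1 k, q2 k)), Set.Icc p r) = U := by
    ext x; simp [hUdef]
  have hIns : (⋃ p ∈ (insert y (Finset.univ.image fun k => (q1 k, q2 k))), Set.Icc p r)
      = Set.Icc y r ∪ U := by
    rw [Finset.set_biUnion_insert, hPU]
  -- basic inequalities
  have hbr1 : q1 b < r.1 := (hr b).1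
  have har2 : q2 a < r.2 := (hr a).2
  -- S ⊆ Icc y r
  have hSsub : S ⊆ Set.Icc y r := by
    rintro ⟨x1, x2⟩ ⟨⟨h1a, h1b⟩, ⟨h2a, h2b⟩⟩
    exact ⟨⟨h1a, h2a⟩, ⟨le_of_lt (h1b.trans hbr1), le_of_lt (h2b.trans har2)⟩⟩
  -- union decomposition
  have hunion : Set.Icc y r ∪ U = S ∪ U := by
    apply Set.Subset.antisymm
    · rintro x (hx | hx)
      · obtain ⟨⟨hy1, hy2⟩, ⟨hr1, hr2⟩⟩ := hx
        by_cases hc1 : x.1 < q1 b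
        · by_cases hc2 : x.2 < q2 a
          · exact Or.inl ⟨⟨hy1, hc1⟩, ⟨hy2, hc2⟩⟩
          · refine Or.inr (Set.mem_iUnion.2 ⟨a, ?_⟩)
            exact ⟨⟨ha1.trans hy1, le_of_not_gt hc2⟩, ⟨hr1, hr2⟩⟩
        · refine Or.inr (Set.mem_iUnion.2 ⟨b, ?_⟩)
          exact ⟨⟨le_of_not_gt hc1, hb2.trans hy2⟩, ⟨hr1, hr2⟩⟩
      · exact Or.inr hx
    · rintro x (hx | hx)
      · exact Or.inl (hSsub hx)
      · exact Or.inr hx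
  -- disjointness
  have hdisj : Disjoint S U := by
    rw [Set.disjoint_iff_inter_eq_empty]
    ext x
    simp only [Set.mem_inter_iff, Set.mem_empty_iff_false, iff_false, not_and]
    rintro ⟨⟨_, h1b'⟩, ⟨_, h2b'⟩⟩ hxU
    obtain ⟨k, hk⟩ := Set.mem_iUnion.1 hxU
    obtain ⟨⟨hk1, hk2⟩, _⟩ := hk
    rcases le_or_gt k a with hka | hka
    · have : q2 a ≤ q2 k := h2.antitone hka
      exact absurd (this.trans hk2) (not_le.2 h2b')
    · have hbk : b ≤ k := by
        have hh := Fin.lt_def.1 hka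
        rw [Fin.le_def, hab]; omega

      have : q1 b ≤ q1 k := h1.monotone hbk
      exact absurd (this.trans hk1) (not_le.2 h1b')
  -- measurability and finiteness
  have hUmeas : MeasurableSet U := MeasurableSet.iUnion fun k => measurableSet_Icc
  have hUfin : volume U ≠ ⊤ := by
    refine ne_of_lt (lt_of_le_of_lt (measure_iUnion_le _) ?_)
    rw [tsum_fintype]
    exact ENNReal.sum_lt_top.2 fun k _ => measure_Icc_lt_top
  have hSvol : volume S = ENNReal.ofReal (q1 b - y.1) * ENNReal.ofReal (q2 a - y.2) := by
    rw [hSdef, Measure.volume_eq_prod, Measure.prod_prod, Real.volume_Ico, Real.volume_Ico]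
  have hSfin : volume S ≠ ⊤ := by
    rw [hSvol]; exact ENNReal.mul_ne_top ENNReal.ofReal_ne_top ENNReal.ofReal_ne_top
  have hvol : volume (Set.Icc y r ∪ U) = volume S + volume U := by
    rw [hunion, measure_union hdisj hUmeas]
  rw [HV2, HV2, hIns, hPU, hvol, ENNReal.toReal_add hSfin hUfin]
  rw [hSvol, ENNReal.toReal_mul, ENNReal.toReal_ofReal (by linarith), ENNReal.toReal_ofReal (by linarith)]
  ring
end

section
/- Given the cell decomposition of the bounded objective region (−∞, r₁] × (−∞, r₂] into cells C(i,j) = [l^{(i,j)}, u^{(i,j)}] with l^{(i,j)} = (q₁⁽ⁱ⁾, q₂⁽ⁿ⁺¹⁻ʲ⁾) and u^{(i,j)} = (q₁⁽ⁱ⁺¹⁾, q₂⁽ⁿ⁻ʲ⁾) for i, j ∈ [0..n], the union of all cells equals (−∞, r₁] × (−∞, r₂], and the interiors of distinct cells are pairwise disjoint. -/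
/-- The cell `C(i,j) = [l⁽ⁱʲ⁾, u⁽ⁱʲ⁾]` of the bi-objective cell decomposition, where the
(extended-real valued) boundary coordinates are `l⁽ⁱʲ⁾ = (Q₁ i, Q₂ (n+1−j))` and
`u⁽ⁱʲ⁾ = (Q₁ (i+1), Q₂ (n−j))`. -/
def Cell (Q1 Q2 : ℕ → EReal) (n i j : ℕ) : Set (ℝ × ℝ) :=
  {y | Q1 i ≤ (y.1 : EReal) ∧ (y.1 : EReal) ≤ Q1 (i + 1) ∧
       Q2 (n + 1 - j) ≤ (y.2 : EReal) ∧ (y.2 : EReal) ≤ Q2 (n - j)}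

/-- Interior points of a cell satisfy strict versions of all four defining inequalities. -/
lemma interior_cell_subset (Q1 Q2 : ℕ → EReal) (n i j : ℕ) :
    interior (Cell Q1 Q2 n i j) ⊆
      {y : ℝ × ℝ | Q1 i < (y.1 : EReal) ∧ (y.1 : EReal) < Q1 (i + 1) ∧
        Q2 (n + 1 - j) < (y.2 : EReal) ∧ (y.2 : EReal) < Q2 (n - j)} := by
  intro y hy
  rw [mem_interior_iff_mem_nhds, Metric.mem_nhds_iff] at hy
  obtain ⟨ε, hε, hball⟩ := hy
  have key : ∀ a b : ℝ, |a - y.1| < ε → |b - y.2| < ε → (a, b) ∈ Cell Q1 Q2 n i j := by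
    intro a b ha hb
    apply hball
    rw [Metric.mem_ball, Prod.dist_eq, Real.dist_eq, Real.dist_eq]
    exact max_lt ha hb
  have h0 : |(0:ℝ)| < ε := by rw [abs_zero]; exact hε
  have hh : |(y.1 - ε/2) - y.1| < ε ∧ |(y.1 + ε/2) - y.1| < ε ∧
      |(y.2 - ε/2) - y.2| < ε ∧ |(y.2 + ε/2) - y.2| < ε := by
    constructor
    · rw [show y.1 - ε/2 - y.1 = -(ε/2) by ring, abs_neg, abs_of_pos (by linarith)]; linarith
    constructor
    · rw [show y.1 + ε/2 - y.1 = ε/2 by ring, abs_of_pos (by linarith)]; linarith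
    constructor
    · rw [show y.2 - ε/2 - y.2 = -(ε/2) by ring, abs_neg, abs_of_pos (by linarith)]; linarith
    · rw [show y.2 + ε/2 - y.2 = ε/2 by ring, abs_of_pos (by linarith)]; linarith
  obtain ⟨ha1, ha2, hb1, hb2⟩ := hh
  have c1 := key (y.1 - ε/2) y.2 ha1 (by simpa using h0)
  have c2 := key (y.1 + ε/2) y.2 ha2 (by simpa using h0)
  have c3 := key y.1 (y.2 - ε/2) (by simpa using h0) hb1
  have c4 := key y.1 (y.2 + ε/2) (by simpa using h0) hb2
  refine ⟨lt_of_le_of_lt c1.1 ?_, lt_of_lt_of_le ?_ c2.2.1,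
    lt_of_le_of_lt c3.2.2.1 ?_, lt_of_lt_of_le ?_ c4.2.2.2⟩
  · exact_mod_cast (by linarith : y.1 - ε/2 < y.1)
  · exact_mod_cast (by linarith : y.1 < y.1 + ε/2)
  · exact_mod_cast (by linarith : y.2 - ε/2 < y.2)
  · exact_mod_cast (by linarith : y.2 < y.2 + ε/2)

/-- The cells `C(i,j)`, `i, j ∈ [0..n]`, cover the region `(−∞, r₁] × (−∞, r₂]`, and distinct
cells have disjoint interiors.  Here `Q₁, Q₂` are the coordinates of the augmented Pareto set:
`Q₁` strictly increasing with `Q₁ 0 = −∞`, `Q₁ (n+1) = r₁`; `Q₂` strictly decreasing with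
`Q₂ 0 = r₂`, `Q₂ (n+1) = −∞`. -/
theorem cell_decomposition (n : ℕ) (Q1 Q2 : ℕ → EReal) (r : ℝ × ℝ)
    (hQ1 : ∀ k l, k < l → l ≤ n + 1 → Q1 k < Q1 l)
    (hQ2 : ∀ k l, k < l → l ≤ n + 1 → Q2 l < Q2 k)
    (h10 : Q1 0 = ⊥) (h1r : Q1 (n + 1) = (r.1 : EReal))
    (h20 : Q2 0 = (r.2 : EReal)) (h2r : Q2 (n + 1) = ⊥) :
    (⋃ i ∈ Finset.range (n + 1), ⋃ j ∈ Finset.range (n + 1), Cell Q1 Q2 n i j) =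
        {y : ℝ × ℝ | y.1 ≤ r.1 ∧ y.2 ≤ r.2} ∧
      ∀ i j i' j', i ≤ n → j ≤ n → i' ≤ n → j' ≤ n → (i, j) ≠ (i', j') →
        interior (Cell Q1 Q2 n i j) ∩ interior (Cell Q1 Q2 n i' j') = ∅ := by
  classical
  have mono1 : ∀ k l, k ≤ l → l ≤ n + 1 → Q1 k ≤ Q1 l := by
    intro k l hkl hl
    rcases eq_or_lt_of_le hkl with h | h
    · rw [h]
    · exact (hQ1 k l h hl).le
  have mono2 : ∀ k l, k ≤ l → l ≤ n + 1 → Q2 l ≤ Q2 k := by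
    intro k l hkl hl
    rcases eq_or_lt_of_le hkl with h | h
    · rw [h]
    · exact (hQ2 k l h hl).le
  constructor
  · ext y
    simp only [Set.mem_iUnion, Finset.mem_range, Set.mem_setOf_eq, Nat.lt_succ_iff]
    constructor
    · rintro ⟨i, hi, j, hj, h1, h2, h3, h4⟩
      refine ⟨?_, ?_⟩
      · have := le_trans h2 (mono1 (i+1) (n+1) (by omega) le_rfl)
        rw [h1r] at this; exact_mod_cast this
      · have := le_trans h4 (mono2 0 (n-j) (by omega) (by omega))
        rw [h20] at this; exact_mod_cast this
    · rintro ⟨hy1, hy2⟩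
      set P1 : ℕ → Prop := fun k => Q1 k ≤ (y.1 : EReal) with hP1def
      set P2 : ℕ → Prop := fun k => (y.2 : EReal) ≤ Q2 k with hP2def
      have hP10 : P1 0 := by simp only [hP1def, h10]; exact bot_le
      have hP20 : P2 0 := by simp only [hP2def, h20]; exact_mod_cast hy2
      set i := Nat.findGreatest P1 n with hidef
      set m := Nat.findGreatest P2 n with hmdef
      have hin : i ≤ n := Nat.findGreatest_le n
      have hmn : m ≤ n := Nat.findGreatest_le n
      have hm1 : n + 1 - (n - m) = m + 1 := by omega
      have hm2 : n - (n - m) = m := by omega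
      refine ⟨i, hin, n - m, by omega, Nat.findGreatest_spec (Nat.zero_le n) hP10, ?_, ?_, ?_⟩
      · rcases eq_or_lt_of_le hin with h | h
        · rw [h, h1r]; exact_mod_cast hy1
        · have hng := Nat.findGreatest_is_greatest (Nat.lt_succ_self i) (by omega)
          exact (not_le.mp hng).le
      · rw [hm1]
        rcases eq_or_lt_of_le hmn with h | h
        · rw [h, h2r]; exact bot_le
        · have hng := Nat.findGreatest_is_greatest (Nat.lt_succ_self m) (by omega)
          exact (not_le.mp hng).le
      · rw [hm2]; exact Nat.findGreatest_spec (Nat.zero_le n) hP20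
  · intro i j i' j' hi hj hi' hj' hne
    rw [Set.eq_empty_iff_forall_notMem]
    rintro y ⟨hy, hy'⟩
    have s := interior_cell_subset Q1 Q2 n i j hy
    have s' := interior_cell_subset Q1 Q2 n i' j' hy'
    obtain ⟨a1, a2, a3, a4⟩ := s
    obtain ⟨b1, b2, b3, b4⟩ := s'
    have hij : i ≠ i' ∨ j ≠ j' := by
      by_contra h
      push_neg at h
      exact hne (by rw [h.1, h.2])
    have habs1 : ∀ k k', k < k' → k' ≤ n →
        (Q1 k' < (y.1 : EReal)) → ((y.1 : EReal) < Q1 (k + 1)) → False := by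
      intro k k' hkk' hk' hlt hlt'
      have : Q1 (k+1) ≤ Q1 k' := mono1 (k+1) k' (by omega) (by omega)
      exact absurd (lt_trans hlt' (lt_of_le_of_lt this hlt)) (lt_irrefl _)
    have habs2 : ∀ l l', l < l' → l' ≤ n →
        (Q2 (n + 1 - l') < (y.2 : EReal)) → ((y.2 : EReal) < Q2 (n - l)) → False := by
      intro l l' hll' hl' hlt hlt'
      have : Q2 (n - l) ≤ Q2 (n + 1 - l') := mono2 (n + 1 - l') (n - l) (by omega) (by omega)
      exact absurd (lt_trans hlt' (lt_of_le_of_lt this hlt)) (lt_irrefl _)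
    rcases hij with h | h
    · rcases Nat.lt_or_ge i i' with hlt | hge
      · exact habs1 i i' hlt hi' b1 a2
      · exact habs1 i' i (by omega) hi a1 b2
    · rcases Nat.lt_or_ge j j' with hlt | hge
      · exact habs2 j j' hlt hj' b3 a4
      · exact habs2 j' j (by omega) hj a3 b4
end

section
/- In the cell decomposition of the bi-objective space with n Pareto points, a cell C(i,j) with i + j ≤ n lies (except for boundary) in the non-dominated region of the augmented Pareto set, and a cell C(i,j) with i + j > n lies in the dominated region: concretely, the interior of C(i,j) is disjoint from the dominated set of P iff i + j ≤ n. -/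
/-- The interior of the cell `C(i,j)` is disjoint from the region dominated by the Pareto set
`P = {(Q₁ k, Q₂ k) : 1 ≤ k ≤ n}` if and only if `i + j ≤ n`. -/
theorem cell_nondominated_iff (n : ℕ) (Q1 Q2 : ℕ → EReal) (r : ℝ × ℝ)
    (hQ1 : ∀ k l, k < l → l ≤ n + 1 → Q1 k < Q1 l)
    (hQ2 : ∀ k l, k < l → l ≤ n + 1 → Q2 l < Q2 k)
    (h10 : Q1 0 = ⊥) (h1r : Q1 (n + 1) = (r.1 : EReal))
    (h20 : Q2 0 = (r.2 : EReal)) (h2r : Q2 (n + 1) = ⊥) :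
    ∀ i j, i ≤ n → j ≤ n →
      (interior (Cell Q1 Q2 n i j) ∩
          {y : ℝ × ℝ | ∃ k, 1 ≤ k ∧ k ≤ n ∧ Q1 k ≤ (y.1 : EReal) ∧ Q2 k ≤ (y.2 : EReal)} = ∅
        ↔ i + j ≤ n) := by
  intro i j hi hj
  constructor
  · -- disjointness → i + j ≤ n, by contraposition
    intro hdisj
    by_contra hgt
    push_neg at hgt
    have hj1 : 1 ≤ j := by omega
    set k : ℕ := n + 1 - j with hk
    have hk1 : 1 ≤ k := by omega
    have hkn : k ≤ n := by omega
    have hki : k ≤ i := by omega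
    have hx1lt : Q1 i < Q1 (i + 1) := hQ1 i (i + 1) (by omega) (by omega)
    have hx2lt : Q2 (n + 1 - j) < Q2 (n - j) := hQ2 (n - j) (n + 1 - j) (by omega) (by omega)
    obtain ⟨x1, hx1a, hx1b⟩ := EReal.exists_between_coe_real hx1lt
    obtain ⟨x2, hx2a, hx2b⟩ := EReal.exists_between_coe_real hx2lt
    have hopen : IsOpen {y : ℝ × ℝ | Q1 i < (y.1 : EReal) ∧ (y.1 : EReal) < Q1 (i + 1) ∧
        Q2 (n + 1 - j) < (y.2 : EReal) ∧ (y.2 : EReal) < Q2 (n - j)} := by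
      have c1 : Continuous fun y : ℝ × ℝ => (y.1 : EReal) :=
        continuous_coe_real_ereal.comp continuous_fst
      have c2 : Continuous fun y : ℝ × ℝ => (y.2 : EReal) :=
        continuous_coe_real_ereal.comp continuous_snd
      have : {y : ℝ × ℝ | Q1 i < (y.1 : EReal) ∧ (y.1 : EReal) < Q1 (i + 1) ∧
          Q2 (n + 1 - j) < (y.2 : EReal) ∧ (y.2 : EReal) < Q2 (n - j)} =
          ((fun y : ℝ × ℝ => (y.1 : EReal)) ⁻¹' Set.Ioi (Q1 i)) ∩
          ((fun y : ℝ × ℝ => (y.1 : EReal)) ⁻¹' Set.Iio (Q1 (i + 1))) ∩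
          (((fun y : ℝ × ℝ => (y.2 : EReal)) ⁻¹' Set.Ioi (Q2 (n + 1 - j))) ∩
          ((fun y : ℝ × ℝ => (y.2 : EReal)) ⁻¹' Set.Iio (Q2 (n - j)))) := by
        ext y
        simp only [Set.mem_setOf_eq, Set.mem_inter_iff, Set.mem_preimage, Set.mem_Ioi,
          Set.mem_Iio]
        tauto
      rw [this]
      exact (((isOpen_Ioi.preimage c1).inter (isOpen_Iio.preimage c1)).inter
        ((isOpen_Ioi.preimage c2).inter (isOpen_Iio.preimage c2)))
    have hmem : (x1, x2) ∈ interior (Cell Q1 Q2 n i j) := by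
      have hss : {y : ℝ × ℝ | Q1 i < (y.1 : EReal) ∧ (y.1 : EReal) < Q1 (i + 1) ∧
          Q2 (n + 1 - j) < (y.2 : EReal) ∧ (y.2 : EReal) < Q2 (n - j)} ⊆ Cell Q1 Q2 n i j :=
        fun y hy => ⟨le_of_lt hy.1, le_of_lt hy.2.1, le_of_lt hy.2.2.1, le_of_lt hy.2.2.2⟩
      exact interior_maximal hss hopen ⟨hx1a, hx1b, hx2a, hx2b⟩
    have hdom : (x1, x2) ∈ {y : ℝ × ℝ | ∃ k, 1 ≤ k ∧ k ≤ n ∧ Q1 k ≤ (y.1 : EReal) ∧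
        Q2 k ≤ (y.2 : EReal)} := by
      refine ⟨k, hk1, hkn, ?_, le_of_lt hx2a⟩
      rcases eq_or_lt_of_le hki with h | h
      · exact h ▸ le_of_lt hx1a
      · exact le_of_lt ((hQ1 k i h (by omega)).trans hx1a)
    rw [Set.eq_empty_iff_forall_notMem] at hdisj
    exact hdisj (x1, x2) ⟨hmem, hdom⟩
  · -- i + j ≤ n → disjointness
    intro hle
    rw [Set.eq_empty_iff_forall_notMem]
    rintro y ⟨hyint, k, hk1, hkn, hkx, hky⟩
    obtain ⟨ε, hε, hball⟩ := Metric.isOpen_iff.1 isOpen_interior y hyint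
    have hsub : Metric.ball y ε ⊆ Cell Q1 Q2 n i j := hball.trans interior_subset
    have hp1 : ((y.1 + ε / 2, y.2) : ℝ × ℝ) ∈ Metric.ball y ε := by
      rw [Metric.mem_ball, Prod.dist_eq]
      simp only [Real.dist_eq]
      rw [show y.1 + ε / 2 - y.1 = ε / 2 by ring]
      rw [abs_of_nonneg (le_of_lt (half_pos hε))]
      simp only [sub_self, abs_zero]
      rw [max_eq_left (le_of_lt (half_pos hε))]
      linarith
    have hp2 : ((y.1, y.2 + ε / 2) : ℝ × ℝ) ∈ Metric.ball y ε := by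
      rw [Metric.mem_ball, Prod.dist_eq]
      simp only [Real.dist_eq]
      rw [show y.2 + ε / 2 - y.2 = ε / 2 by ring]
      rw [abs_of_nonneg (le_of_lt (half_pos hε))]
      simp only [sub_self, abs_zero]
      rw [max_eq_right (le_of_lt (half_pos hε))]
      linarith
    have hlt1 : (y.1 : EReal) < Q1 (i + 1) := by
      have h := (hsub hp1).2.1
      calc (y.1 : EReal) < ((y.1 + ε / 2 : ℝ) : EReal) := by
            exact_mod_cast (by linarith : y.1 < y.1 + ε / 2)
        _ ≤ Q1 (i + 1) := h
    have hlt2 : (y.2 : EReal) < Q2 (n - j) := by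
      have h := (hsub hp2).2.2.2
      calc (y.2 : EReal) < ((y.2 + ε / 2 : ℝ) : EReal) := by
            exact_mod_cast (by linarith : y.2 < y.2 + ε / 2)
        _ ≤ Q2 (n - j) := h
    have hki : k ≤ i := by
      by_contra h
      push_neg at h
      have hk' : Q1 (i + 1) ≤ Q1 k := by
        rcases eq_or_lt_of_le (Nat.succ_le_of_lt h) with h' | h'
        · exact h' ▸ le_refl _
        · exact (hQ1 (i + 1) k h' (by omega)).le
      exact absurd (hkx.trans_lt hlt1) (not_lt.2 hk')
    have hkj : n - j < k := by
      by_contra h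
      push_neg at h
      have hk' : Q2 (n - j) ≤ Q2 k := by
        rcases eq_or_lt_of_le h with h' | h'
        · exact h' ▸ le_refl _
        · exact (hQ2 k (n - j) h' (by omega)).le
      exact absurd (hky.trans_lt hlt2) (not_lt.2 hk')
    omega
end

section
/- For y in a non-dominated cell C(i,j) (i + j ≤ n) of the bi-objective cell decomposition, the hypervolume improvement decomposes as Δ⁺(y) = (q₁^{(n+1−j)} − y₁)(q₂^{(i)} − y₂) + γ^{(i,j)}, where γ^{(i,j)} = Δ⁺(u^{(i,j)}) − (q₁^{(n+1−j)} − u₁^{(i,j)})(q₂^{(i)} − u₂^{(i,j)}) is a constant depending only on the cell. -/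
open MeasureTheory

lemma vol2 (p q : ℝ × ℝ) :
    volume (Set.Icc p q) = ENNReal.ofReal (q.1 - p.1) * ENNReal.ofReal (q.2 - p.2) := by
  rw [Set.Icc_prod_eq, Measure.volume_eq_prod, Measure.prod_prod, Real.volume_Icc,
    Real.volume_Icc]

lemma vol2_fin (p q : ℝ × ℝ) : volume (Set.Icc p q) ≠ ⊤ := by
  rw [vol2]; exact ENNReal.mul_ne_top ENNReal.ofReal_ne_top ENNReal.ofReal_ne_top

lemma volU_fin (P : Finset (ℝ × ℝ)) (r : ℝ × ℝ) : volume (⋃ p ∈ P, Set.Icc p r) ≠ ⊤ := by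
  refine ne_top_of_le_ne_top ?_ (measure_biUnion_finset_le P _)
  exact (ENNReal.sum_lt_top.mpr fun p _ => (vol2_fin p r).lt_top).ne

lemma hv_insert (P : Finset (ℝ × ℝ)) (y r : ℝ × ℝ) :
    HV2 (insert y P) r = HV2 P r +
      (volume (Set.Icc y r \ ⋃ p ∈ P, Set.Icc p r)).toReal := by
  classical
  set U := ⋃ p ∈ P, Set.Icc p r with hU
  have hUm : MeasurableSet U :=
    P.measurableSet_biUnion fun p _ => measurableSet_Icc
  have hUfin : volume U ≠ ⊤ := volU_fin P r
  have h1 : ⋃ a ∈ insert y P, Set.Icc a r = Set.Icc y r ∪ U := by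
    simp [hU, Set.biUnion_insert]
  have h2 : volume (Set.Icc y r ∪ U) = volume U + volume (Set.Icc y r \ U) := by
    rw [Set.union_comm, ← Set.union_diff_self]
    exact measure_union disjoint_sdiff_self_right (measurableSet_Icc.diff hUm)
  have hdfin : volume (Set.Icc y r \ U) ≠ ⊤ :=
    ne_top_of_le_ne_top (vol2_fin y r) (measure_mono Set.diff_subset)
  rw [HV2, HV2, h1, h2, ENNReal.toReal_add hUfin hdfin]

lemma key (n : ℕ) (q1 q2 : ℕ → ℝ) (r : ℝ × ℝ)
    (hmono : ∀ k l, 1 ≤ k → k < l → l ≤ n → q1 k < q1 l ∧ q2 l < q2 k)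
    (hr : ∀ k, 1 ≤ k → k ≤ n → q1 k < r.1 ∧ q2 k < r.2)
    (P : Finset (ℝ × ℝ)) (hP : P = (Finset.Icc 1 n).image fun k => (q1 k, q2 k))
    (i j : ℕ) (hi : 1 ≤ i) (hj : 1 ≤ j) (hij : i + j ≤ n)
    (y : ℝ × ℝ)
    (hy1 : q1 i ≤ y.1) (hy1' : y.1 ≤ q1 (i + 1))
    (hy2 : q2 (n + 1 - j) ≤ y.2) (hy2' : y.2 ≤ q2 (n - j)) :
    volume (Set.Icc y r \ ⋃ p ∈ P, Set.Icc p r) =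
      ENNReal.ofReal ((q1 (n + 1 - j) - y.1) * (q2 i - y.2)
          - (q1 (n + 1 - j) - q1 (i + 1)) * (q2 i - q2 (n - j)))
        + volume (Set.Icc (q1 (i + 1), q2 (n - j)) (q1 (n + 1 - j), q2 i)
            \ ⋃ k ∈ Finset.Icc (i + 1) (n - j), Set.Icc (q1 k, q2 k) r) := by
  classical
  -- monotonicity in the weak form
  have mono1 : ∀ k l, 1 ≤ k → k ≤ l → l ≤ n → q1 k ≤ q1 l ∧ q2 l ≤ q2 k := by
    intro k l hk hkl hl
    rcases eq_or_lt_of_le hkl with h | h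
    · subst h; exact ⟨le_refl _, le_refl _⟩
    · exact ⟨(hmono k l hk h hl).1.le, (hmono k l hk h hl).2.le⟩
  set a := q1 (n + 1 - j) with ha
  set b := q2 i with hb
  set u : ℝ × ℝ := (q1 (i + 1), q2 (n - j)) with hu
  set U := ⋃ p ∈ P, Set.Icc p r with hUdef
  set W := ⋃ k ∈ Finset.Icc (i + 1) (n - j), Set.Icc (q1 k, q2 k) r with hWdef
  -- index arithmetic
  have hjn : j ≤ n := le_trans (by omega) hij
  have h1nj : 1 ≤ n + 1 - j := by omega
  have hnjn : n + 1 - j ≤ n := by omega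
  have hi1nj : i + 1 ≤ n + 1 - j := by omega
  have hin : i ≤ n := by omega
  have hinj : i ≤ n - j := by omega
  have hnjn' : n - j ≤ n := by omega
  have h1nj' : 1 ≤ n - j := by omega
  have hsucc : n + 1 - j = (n - j) + 1 := by omega
  -- basic order facts
  have hua : u.1 ≤ a := (mono1 (i + 1) (n + 1 - j) (by omega) hi1nj hnjn).1
  have hub : u.2 ≤ b := (mono1 i (n - j) hi hinj hnjn').2
  have har : a < r.1 := (hr _ h1nj hnjn).1
  have hbr : b < r.2 := (hr _ hi hin).2
  have hya : y.1 ≤ a := le_trans hy1' hua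
  have hyb : y.2 ≤ b := le_trans hy2' hub
  have memU : ∀ x : ℝ × ℝ, x ∈ U ↔
      ∃ k, 1 ≤ k ∧ k ≤ n ∧ x ∈ Set.Icc (q1 k, q2 k) r := by
    intro x
    simp only [hUdef, hP, Set.mem_iUnion, exists_prop, Finset.mem_coe, Finset.mem_image,
      Finset.mem_Icc]
    constructor
    · rintro ⟨p, ⟨k, ⟨hk1, hk2⟩, rfl⟩, hx⟩; exact ⟨k, hk1, hk2, hx⟩
    · rintro ⟨k, hk1, hk2, hx⟩; exact ⟨_, ⟨k, ⟨hk1, hk2⟩, rfl⟩, hx⟩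
  have memW : ∀ x : ℝ × ℝ, x ∈ W ↔
      ∃ k, i + 1 ≤ k ∧ k ≤ n - j ∧ x ∈ Set.Icc (q1 k, q2 k) r := by
    intro x
    simp only [hWdef, Set.mem_iUnion, exists_prop, Finset.mem_coe, Finset.mem_Icc]
    constructor
    · rintro ⟨k, ⟨hk1, hk2⟩, hx⟩; exact ⟨k, hk1, hk2, hx⟩
    · rintro ⟨k, hk1, hk2, hx⟩; exact ⟨k, ⟨hk1, hk2⟩, hx⟩
  have hWU : W ⊆ U := by
    intro x hx
    rcases (memW x).1 hx with ⟨k, hk1, hk2, hx⟩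
    exact (memU x).2 ⟨k, by omega, by omega, hx⟩
  -- Step 1: Icc y r \ U = Icc y (a,b) \ U
  have step1 : Set.Icc y r \ U = Set.Icc y (a, b) \ U := by
    ext x
    simp only [Set.mem_diff, Set.mem_Icc, Prod.le_def]
    constructor
    · rintro ⟨⟨⟨hx1, hx2⟩, ⟨hx3, hx4⟩⟩, hxU⟩
      refine ⟨⟨⟨hx1, hx2⟩, ?_, ?_⟩, hxU⟩
      · by_contra hc
        push_neg at hc
        exact hxU ((memU x).2 ⟨n + 1 - j, h1nj, hnjn,
          ⟨⟨hc.le, le_trans hy2 hx2⟩, hx3, hx4⟩⟩)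
      · by_contra hc
        push_neg at hc
        exact hxU ((memU x).2 ⟨i, hi, hin, ⟨⟨le_trans hy1 hx1, hc.le⟩, hx3, hx4⟩⟩)
    · rintro ⟨⟨⟨hx1, hx2⟩, ⟨hx3, hx4⟩⟩, hxU⟩
      exact ⟨⟨⟨hx1, hx2⟩, le_trans hx3 har.le, le_trans hx4 hbr.le⟩, hxU⟩
  -- Step 2: the two diffs have the same volume
  have hline1 : volume {x : ℝ × ℝ | x.1 = a} = 0 := by
    have : {x : ℝ × ℝ | x.1 = a} = {a} ×ˢ (Set.univ : Set ℝ) := by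
      ext x
      simp only [Set.mem_setOf_eq, Set.mem_prod, Set.mem_singleton_iff, Set.mem_univ, and_true]
    rw [this, Measure.volume_eq_prod, Measure.prod_prod, Real.volume_singleton, zero_mul]
  have hline2 : volume {x : ℝ × ℝ | x.2 = b} = 0 := by
    have : {x : ℝ × ℝ | x.2 = b} = (Set.univ : Set ℝ) ×ˢ {b} := by
      ext x
      simp only [Set.mem_setOf_eq, Set.mem_prod, Set.mem_singleton_iff, Set.mem_univ, true_and]
    rw [this, Measure.volume_eq_prod, Measure.prod_prod, Real.volume_singleton, mul_zero]
  have step2 : volume (Set.Icc y (a, b) \ U) = volume (Set.Icc y (a, b) \ W) := by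
    refine le_antisymm (measure_mono (Set.diff_subset_diff_right hWU)) ?_
    have hsub : Set.Icc y (a, b) \ W ⊆
        (Set.Icc y (a, b) \ U) ∪ ({x : ℝ × ℝ | x.1 = a} ∪ {x : ℝ × ℝ | x.2 = b}) := by
      intro x hx
      rcases hx with ⟨hxR, hxW⟩
      by_cases hxU : x ∈ U
      · rcases (memU x).1 hxU with ⟨k, hk1, hk2, hxk⟩
        simp only [Set.mem_Icc, Prod.le_def] at hxk hxR
        right
        rcases le_or_gt k i with hki | hki
        · -- then q2 k ≥ b, so x.2 = b
          have h2 : b ≤ q2 k := (mono1 k i hk1 hki hin).2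
          right
          exact le_antisymm hxR.2.2 (le_trans h2 hxk.1.2)
        · rcases le_or_gt (n + 1 - j) k with hkj | hkj
          · have h1 : a ≤ q1 k := (mono1 (n + 1 - j) k h1nj hkj hk2).1
            left
            exact le_antisymm hxR.2.1 (le_trans h1 hxk.1.1)
          · exact absurd ((memW x).2 ⟨k, by omega, by omega, hxk⟩) hxW
      · exact Or.inl ⟨hxR, hxU⟩
    calc volume (Set.Icc y (a, b) \ W)
        ≤ volume ((Set.Icc y (a, b) \ U) ∪ ({x : ℝ × ℝ | x.1 = a} ∪ {x : ℝ × ℝ | x.2 = b})) :=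
          measure_mono hsub
      _ ≤ volume (Set.Icc y (a, b) \ U) +
            volume ({x : ℝ × ℝ | x.1 = a} ∪ {x : ℝ × ℝ | x.2 = b}) := measure_union_le _ _
      _ ≤ volume (Set.Icc y (a, b) \ U) + (volume {x : ℝ × ℝ | x.1 = a} +
            volume {x : ℝ × ℝ | x.2 = b}) := by gcongr; exact measure_union_le _ _
      _ = volume (Set.Icc y (a, b) \ U) := by rw [hline1, hline2]; simp
  -- Step 3: split the rectangle
  have hWsub : W ∩ Set.Icc y (a, b) ⊆ Set.Icc u (a, b) := by
    rintro x ⟨hxW, hxR⟩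
    rcases (memW x).1 hxW with ⟨k, hk1, hk2, hxk⟩
    simp only [Set.mem_Icc, Prod.le_def] at hxk hxR ⊢
    have h1 : u.1 ≤ q1 k := (mono1 (i + 1) k (by omega) hk1 (by omega)).1
    have h2 : u.2 ≤ q2 k := (mono1 k (n - j) (by omega) hk2 hnjn').2
    exact ⟨⟨le_trans h1 hxk.1.1, le_trans h2 hxk.1.2⟩, hxR.2⟩
  have hRuR : Set.Icc u (a, b) ⊆ Set.Icc y (a, b) :=
    Set.Icc_subset_Icc_left (by exact ⟨hy1', hy2'⟩)
  have step3 : Set.Icc y (a, b) \ W =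
      (Set.Icc y (a, b) \ Set.Icc u (a, b)) ∪ (Set.Icc u (a, b) \ W) := by
    ext x
    constructor
    · rintro ⟨hxR, hxW⟩
      by_cases hxu : x ∈ Set.Icc u (a, b)
      · exact Or.inr ⟨hxu, hxW⟩
      · exact Or.inl ⟨hxR, hxu⟩
    · rintro (⟨hxR, hxu⟩ | ⟨hxu, hxW⟩)
      · exact ⟨hxR, fun hxW => hxu (hWsub ⟨hxW, hxR⟩)⟩
      · exact ⟨hRuR hxu, hxW⟩
  have hWm : MeasurableSet W :=
    (Finset.Icc (i + 1) (n - j)).measurableSet_biUnion fun k _ => measurableSet_Icc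
  have step4 : volume (Set.Icc y (a, b) \ W) =
      volume (Set.Icc y (a, b) \ Set.Icc u (a, b)) + volume (Set.Icc u (a, b) \ W) := by
    rw [step3]
    refine measure_union ?_ (measurableSet_Icc.diff hWm)
    exact Set.disjoint_of_subset_right Set.diff_subset disjoint_sdiff_self_left
  have step5 : volume (Set.Icc y (a, b) \ Set.Icc u (a, b)) =
      ENNReal.ofReal ((a - y.1) * (b - y.2) - (a - u.1) * (b - u.2)) := by
    rw [measure_diff hRuR measurableSet_Icc.nullMeasurableSet (vol2_fin u (a, b)),
      vol2, vol2]
    have h1 : 0 ≤ a - u.1 := by linarith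
    have h2 : 0 ≤ b - u.2 := by linarith
    have h3 : 0 ≤ a - y.1 := by linarith
    have h4 : 0 ≤ b - y.2 := by linarith
    rw [← ENNReal.ofReal_mul h3, ← ENNReal.ofReal_mul h1,
      ← ENNReal.ofReal_sub _ (mul_nonneg h1 h2)]
  rw [step1, step2, step4, step5, ha, hb, hu]

/-- For `y` in a non-dominated cell `C(i,j)` (with `1 ≤ i`, `1 ≤ j`, `i + j ≤ n`) of the
bi-objective cell decomposition, the hypervolume improvement decomposes as
`Δ⁺(y) = (q₁⁽ⁿ⁺¹⁻ʲ⁾ − y₁)(q₂⁽ⁱ⁾ − y₂) + γ⁽ⁱʲ⁾`, with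
`γ⁽ⁱʲ⁾ = Δ⁺(u⁽ⁱʲ⁾) − (q₁⁽ⁿ⁺¹⁻ʲ⁾ − u₁⁽ⁱʲ⁾)(q₂⁽ⁱ⁾ − u₂⁽ⁱʲ⁾)` depending only on the cell,
where `u⁽ⁱʲ⁾ = (q₁⁽ⁱ⁺¹⁾, q₂⁽ⁿ⁻ʲ⁾)` is the upper-right corner of the cell. -/
theorem hvi2_cell_decomposition (n : ℕ) (q1 q2 : ℕ → ℝ) (r : ℝ × ℝ)
    (hmono : ∀ k l, 1 ≤ k → k < l → l ≤ n → q1 k < q1 l ∧ q2 l < q2 k)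
    (hr : ∀ k, 1 ≤ k → k ≤ n → q1 k < r.1 ∧ q2 k < r.2)
    (P : Finset (ℝ × ℝ)) (hP : P = (Finset.Icc 1 n).image fun k => (q1 k, q2 k))
    (i j : ℕ) (hi : 1 ≤ i) (hj : 1 ≤ j) (hij : i + j ≤ n)
    (y : ℝ × ℝ)
    (hy1 : q1 i ≤ y.1) (hy1' : y.1 ≤ q1 (i + 1))
    (hy2 : q2 (n + 1 - j) ≤ y.2) (hy2' : y.2 ≤ q2 (n - j)) :
    HV2 (insert y P) r - HV2 P r =
      (q1 (n + 1 - j) - y.1) * (q2 i - y.2) +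
        ((HV2 (insert (q1 (i + 1), q2 (n - j)) P) r - HV2 P r) -
          (q1 (n + 1 - j) - q1 (i + 1)) * (q2 i - q2 (n - j))) := by
  classical
  have hu1 : q1 i ≤ q1 (i + 1) := (hmono i (i + 1) hi (lt_add_one i) (by omega)).1.le
  have hu2 : q2 (n + 1 - j) ≤ q2 (n - j) :=
    (hmono (n - j) (n + 1 - j) (by omega) (by omega) (by omega)).2.le
  have hkey_y := key n q1 q2 r hmono hr P hP i j hi hj hij y hy1 hy1' hy2 hy2'
  have hkey_u := key n q1 q2 r hmono hr P hP i j hi hj hij (q1 (i + 1), q2 (n - j))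
    hu1 (le_refl _) hu2 (le_refl _)
  simp only [sub_self, zero_mul, mul_zero, ENNReal.ofReal_zero, zero_add] at hkey_u
  rw [hv_insert, hv_insert, hkey_y, hkey_u]
  set V := volume (Set.Icc (q1 (i + 1), q2 (n - j)) (q1 (n + 1 - j), q2 i)
    \ ⋃ k ∈ Finset.Icc (i + 1) (n - j), Set.Icc (q1 k, q2 k) r) with hV
  have hVfin : V ≠ ⊤ :=
    ne_top_of_le_ne_top (vol2_fin _ _) (measure_mono Set.diff_subset)
  -- nonnegativity of the difference
  have hua : q1 (i + 1) ≤ q1 (n + 1 - j) := by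
    rcases eq_or_lt_of_le (show i + 1 ≤ n + 1 - j by omega) with h | h
    · rw [h]
    · exact (hmono (i + 1) (n + 1 - j) (by omega) h (by omega)).1.le
  have hub : q2 (n - j) ≤ q2 i := by
    rcases eq_or_lt_of_le (show i ≤ n - j by omega) with h | h
    · rw [h]
    · exact (hmono i (n - j) hi h (by omega)).2.le
  have hD : 0 ≤ (q1 (n + 1 - j) - y.1) * (q2 i - y.2)
      - (q1 (n + 1 - j) - q1 (i + 1)) * (q2 i - q2 (n - j)) := by
    have h1 : 0 ≤ q1 (n + 1 - j) - q1 (i + 1) := by linarith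
    have h2 : 0 ≤ q2 i - q2 (n - j) := by linarith
    have h3 : q1 (n + 1 - j) - q1 (i + 1) ≤ q1 (n + 1 - j) - y.1 := by linarith
    have h4 : q2 i - q2 (n - j) ≤ q2 i - y.2 := by linarith
    nlinarith
  rw [ENNReal.toReal_add ENNReal.ofReal_ne_top hVfin, ENNReal.toReal_ofReal hD]
  ring
end

section
/- On a fixed non-dominated cell, the map y ↦ Δ⁺(y) attains its maximum at the lower-left corner l^{(i,j)} and its minimum at the upper-right corner u^{(i,j)}; hence for y ∈ C(i,j), Δ⁺(y) ∈ [Δ⁺(u^{(i,j)}), Δ⁺(l^{(i,j)})]. -/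
open MeasureTheory

lemma hv2_ne_top (A : Finset (ℝ × ℝ)) (r : ℝ × ℝ) :
    volume (⋃ a ∈ A, Set.Icc a r) ≠ ⊤ := by
  refine ne_top_of_le_ne_top ?_
    (measure_biUnion_finset_le (μ := volume) A (fun a => Set.Icc a r))
  exact (ENNReal.sum_lt_top.2 fun a _ => isCompact_Icc.measure_lt_top).ne

lemma hv2_insert_mono (P : Finset (ℝ × ℝ)) (r a b : ℝ × ℝ) (hab : a ≤ b) :
    HV2 (insert b P) r ≤ HV2 (insert a P) r := by
  apply ENNReal.toReal_mono (hv2_ne_top _ _)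
  apply measure_mono
  rw [Finset.set_biUnion_insert, Finset.set_biUnion_insert]
  exact Set.union_subset_union_left _ (Set.Icc_subset_Icc_left hab)

/-- On a non-dominated cell `[l, u]`, the hypervolume improvement `Δ⁺` attains its maximum at
the lower-left corner `l` and its minimum at the upper-right corner `u`: for every `y` in the
cell, `Δ⁺(y) ∈ [Δ⁺(u), Δ⁺(l)]`. -/
theorem hvi2_extrema_on_cell (P : Finset (ℝ × ℝ)) (r l u : ℝ × ℝ)
    (hP : ∀ p ∈ P, p.1 < r.1 ∧ p.2 < r.2)
    (hlu : l ≤ u) (hur : u ≤ r)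
    (hnondom : ∀ y ∈ Set.Icc l u, ∀ p ∈ P, ¬ p < y) :
    ∀ y ∈ Set.Icc l u,
      HV2 (insert u P) r - HV2 P r ≤ HV2 (insert y P) r - HV2 P r ∧
        HV2 (insert y P) r - HV2 P r ≤ HV2 (insert l P) r - HV2 P r := by
  intro y hy
  constructor
  · exact sub_le_sub_right (hv2_insert_mono P r y u hy.2) _
  · exact sub_le_sub_right (hv2_insert_mono P r l y hy.1) _
end

section
/- Let X₁, X₂ be independent random variables where Xₖ is a normal N(μₖ', σₖ²) truncated to [Lₖ, Uₖ] with 0 < Lₖ < Uₖ. If L₁U₂ < U₁L₂, then the density of the product X₁X₂ at p ∈ [L₁L₂, U₁U₂] equals D₁D₂ ∫_{α(p)}^{β(p)} φ_{μ₁',σ₁}(ζ) φ_{μ₂',σ₂}(p/ζ) dζ/ζ, where Dₖ = (Φ_{μₖ',σₖ}(Uₖ) − Φ_{μₖ',σₖ}(Lₖ))⁻¹ and [α(p), β(p)] = [L₁, p/L₂] if L₁L₂ ≤ p < L₁U₂, [p/U₂, p/L₂] if L₁U₂ ≤ p < U₁L₂, and [p/U₂, U₁] if U₁L₂ ≤ p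 ≤ U₁U₂. -/
open MeasureTheory ProbabilityTheory Real

/-- The Gaussian PDF with mean `μ` and standard deviation `σ`. -/
noncomputable def phi (μ σ x : ℝ) : ℝ := gaussianPDFReal μ ⟨σ ^ 2, sq_nonneg σ⟩ x

/-- The Gaussian CDF with mean `μ` and standard deviation `σ`. -/
noncomputable def Phi (μ σ x : ℝ) : ℝ := ∫ t in Set.Iic x, phi μ σ t

lemma var_ne {σ : ℝ} (hσ : 0 < σ) : (⟨σ ^ 2, sq_nonneg σ⟩ : NNReal) ≠ 0 := by
  intro h
  have h2 : σ ^ 2 = 0 := congrArg Subtype.val h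
  exact (pow_pos hσ 2).ne' h2

lemma phi_pos {μ σ : ℝ} (hσ : 0 < σ) (x : ℝ) : 0 < phi μ σ x :=
  gaussianPDFReal_pos _ _ _ (var_ne hσ)

lemma phi_cont {μ σ : ℝ} : Continuous (phi μ σ) := by
  unfold phi gaussianPDFReal
  fun_prop

lemma phi_meas {μ σ : ℝ} : Measurable (phi μ σ) := phi_cont.measurable

lemma phi_integrable {μ σ : ℝ} : Integrable (phi μ σ) := integrable_gaussianPDFReal _ _

lemma phi_le {μ σ : ℝ} (x : ℝ) : phi μ σ x ≤ (Real.sqrt (2 * π * σ ^ 2))⁻¹ := by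
  unfold phi gaussianPDFReal
  change (Real.sqrt (2 * π * σ ^ 2))⁻¹ * Real.exp (-(x - μ) ^ 2 / (2 * σ ^ 2)) ≤ _
  refine mul_le_of_le_one_right (by positivity) ?_
  rw [Real.exp_le_one_iff]
  rcases eq_or_ne σ 0 with h | h
  · simp [h]
  · exact div_nonpos_of_nonpos_of_nonneg (neg_nonpos.2 (sq_nonneg _)) (by positivity)

lemma Phi_sub_pos {μ σ L U : ℝ} (hσ : 0 < σ) (h : L < U) : 0 < Phi μ σ U - Phi μ σ L := by
  have heq : Phi μ σ U - Phi μ σ L = ∫ t in L..U, phi μ σ t :=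
    intervalIntegral.integral_Iic_sub_Iic phi_integrable.integrableOn phi_integrable.integrableOn
  rw [heq]
  exact intervalIntegral.intervalIntegral_pos_of_pos_on
    phi_integrable.intervalIntegrable (fun x _ => phi_pos hσ x) h

section Trunc

open MeasureTheory Real Set Filter

variable (μ σ L U D : ℝ)

noncomputable def tdens : ℝ → ℝ := (Set.Icc L U).indicator (fun t => D * phi μ σ t)

noncomputable def tcdf (s : ℝ) : ℝ := ∫ y in Set.Iic s, tdens μ σ L U D y

variable {μ σ L U D}

lemma tdens_nonneg (hD : 0 ≤ D) (x : ℝ) : 0 ≤ tdens μ σ L U D x :=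
  Set.indicator_nonneg (fun t _ => mul_nonneg hD (gaussianPDFReal_nonneg _ _ t)) x

lemma tdens_meas : Measurable (tdens μ σ L U D) :=
  ((measurable_const.mul phi_meas)).indicator measurableSet_Icc

lemma tdens_int : Integrable (tdens μ σ L U D) :=
  ((phi_integrable.const_mul D)).indicator measurableSet_Icc

lemma tdens_le (hD : 0 ≤ D) (x : ℝ) : tdens μ σ L U D x ≤ D * (Real.sqrt (2 * π * σ ^ 2))⁻¹ := by
  have hM : 0 ≤ D * (Real.sqrt (2 * π * σ ^ 2))⁻¹ := by positivity
  unfold tdens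
  by_cases hx : x ∈ Set.Icc L U
  · rw [Set.indicator_of_mem hx]
    exact mul_le_mul_of_nonneg_left (phi_le x) hD
  · rw [Set.indicator_of_notMem hx]; exact hM

lemma tcdf_sub (a b : ℝ) :
    tcdf μ σ L U D b - tcdf μ σ L U D a = ∫ y in a..b, tdens μ σ L U D y :=
  intervalIntegral.integral_Iic_sub_Iic tdens_int.integrableOn tdens_int.integrableOn

lemma tcdf_nonneg (hD : 0 ≤ D) (s : ℝ) : 0 ≤ tcdf μ σ L U D s :=
  MeasureTheory.setIntegral_nonneg measurableSet_Iic (fun x _ => tdens_nonneg hD x)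

lemma tcdf_le (hD : 0 ≤ D) (s : ℝ) : tcdf μ σ L U D s ≤ ∫ y, tdens μ σ L U D y :=
  MeasureTheory.setIntegral_le_integral tdens_int
    (Filter.Eventually.of_forall (fun x => tdens_nonneg hD x))

lemma tcdf_lip (hD : 0 ≤ D) :
    LipschitzWith (Real.nnabs (D * (Real.sqrt (2 * π * σ ^ 2))⁻¹)) (tcdf μ σ L U D) := by
  set M := D * (Real.sqrt (2 * π * σ ^ 2))⁻¹ with hM
  have hM0 : 0 ≤ M := by positivity
  apply LipschitzWith.of_dist_le_mul
  intro a b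
  rw [Real.dist_eq, Real.dist_eq, tcdf_sub b a, Real.coe_nnabs, abs_of_nonneg hM0]
  calc |∫ y in b..a, tdens μ σ L U D y| = ‖∫ y in b..a, tdens μ σ L U D y‖ :=
        (Real.norm_eq_abs _).symm
    _ ≤ M * |a - b| := intervalIntegral.norm_integral_le_of_norm_le_const (fun y _ => by
        rw [Real.norm_eq_abs, abs_of_nonneg (tdens_nonneg hD y)]; exact tdens_le hD y)

lemma tcdf_cont (hD : 0 ≤ D) : Continuous (tcdf μ σ L U D) := (tcdf_lip hD).continuous

lemma tdens_contAt {s : ℝ} (hs1 : s ≠ L) (hs2 : s ≠ U) :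
    ContinuousAt (tdens μ σ L U D) s := by
  unfold tdens
  by_cases hmem : s ∈ Set.Icc L U
  · have hso : s ∈ Set.Ioo L U := ⟨lt_of_le_of_ne hmem.1 (Ne.symm hs1), lt_of_le_of_ne hmem.2 hs2⟩
    have : ContinuousAt (fun t => D * phi μ σ t) s := (continuous_const.mul phi_cont).continuousAt
    apply this.congr
    filter_upwards [isOpen_Ioo.mem_nhds hso] with y hy
    exact (Set.indicator_of_mem (Set.Ioo_subset_Icc_self hy) (fun t => D * phi μ σ t)).symm
  · apply ContinuousAt.congr (continuousAt_const : ContinuousAt (fun _ : ℝ => (0:ℝ)) s)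
    filter_upwards [isClosed_Icc.isOpen_compl.mem_nhds hmem] with y hy
    exact (Set.indicator_of_notMem hy (fun t => D * phi μ σ t)).symm

lemma tcdf_deriv {s : ℝ} (hs1 : s ≠ L) (hs2 : s ≠ U) :
    HasDerivAt (tcdf μ σ L U D) (tdens μ σ L U D s) s := by
  have key : ∀ u, tcdf μ σ L U D u = tcdf μ σ L U D 0 + ∫ y in (0:ℝ)..u, tdens μ σ L U D y := by
    intro u
    rw [← tcdf_sub 0 u]; ring
  have hd : HasDerivAt (fun u => tcdf μ σ L U D 0 + ∫ y in (0:ℝ)..u, tdens μ σ L U D y)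
      (tdens μ σ L U D s) s :=
    (intervalIntegral.integral_hasDerivAt_right (tdens_int.intervalIntegrable)
      (tdens_meas.stronglyMeasurable.stronglyMeasurableAtFilter) (tdens_contAt hs1 hs2)).const_add _
  exact hd.congr_of_eventuallyEq (Filter.Eventually.of_forall key)

lemma tcdf_hi {s : ℝ} (hs : U ≤ s) : tcdf μ σ L U D s = ∫ y, tdens μ σ L U D y := by
  apply MeasureTheory.setIntegral_eq_integral_of_forall_compl_eq_zero
  intro y hy
  exact Set.indicator_of_notMem (fun h => hy (le_trans h.2 hs)) _

lemma tcdf_lo {s : ℝ} (hs : s < L) : tcdf μ σ L U D s = 0 := by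
  apply MeasureTheory.setIntegral_eq_zero_of_forall_eq_zero
  intro y hy
  exact Set.indicator_of_notMem (fun h => absurd (lt_of_le_of_lt hy hs) (not_lt.2 h.1)) _

end Trunc

open MeasureTheory ProbabilityTheory Real Set Filter

/-- The density of the product `X₁X₂` of two independent truncated normals: for
`p ∈ [L₁L₂, U₁U₂]` (in the case `L₁U₂ < U₁L₂`), the density at `p` (i.e. the derivative of the
CDF of `X₁X₂` at `p`) equals `D₁D₂ ∫_{α(p)}^{β(p)} φ₁(ζ) φ₂(p/ζ) dζ/ζ`. -/
theorem pdf_product_truncated_normal {Ω : Type*} [MeasureSpace Ω]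
    [IsProbabilityMeasure (ℙ : Measure Ω)]
    (X₁ X₂ : Ω → ℝ) (hm₁ : Measurable X₁) (hm₂ : Measurable X₂)
    (hindep : IndepFun X₁ X₂)
    (μ₁' μ₂' σ₁ σ₂ L₁ U₁ L₂ U₂ D₁ D₂ : ℝ)
    (hσ₁ : 0 < σ₁) (hσ₂ : 0 < σ₂)
    (hL₁ : 0 < L₁) (hU₁ : L₁ < U₁) (hL₂ : 0 < L₂) (hU₂ : L₂ < U₂)
    (hD₁ : D₁ = (Phi μ₁' σ₁ U₁ - Phi μ₁' σ₁ L₁)⁻¹)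
    (hD₂ : D₂ = (Phi μ₂' σ₂ U₂ - Phi μ₂' σ₂ L₂)⁻¹)
    (hlaw₁ : Measure.map X₁ ℙ = volume.withDensity fun x =>
      ENNReal.ofReal ((Set.Icc L₁ U₁).indicator (fun t => D₁ * phi μ₁' σ₁ t) x))
    (hlaw₂ : Measure.map X₂ ℙ = volume.withDensity fun x =>
      ENNReal.ofReal ((Set.Icc L₂ U₂).indicator (fun t => D₂ * phi μ₂' σ₂ t) x))
    (hcross : L₁ * U₂ < U₁ * L₂)
    (α β : ℝ → ℝ)
    (hα : ∀ p, α p = if p < L₁ * U₂ then L₁ else p / U₂)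
    (hβ : ∀ p, β p = if p < U₁ * L₂ then p / L₂ else U₁) :
    ∀ p ∈ Set.Icc (L₁ * L₂) (U₁ * U₂),
      HasDerivAt (fun t => (ℙ {ω | X₁ ω * X₂ ω ≤ t}).toReal)
        (D₁ * D₂ * ∫ ζ in (α p)..(β p), phi μ₁' σ₁ ζ * phi μ₂' σ₂ (p / ζ) / ζ) p := by
  intro p hp
  obtain ⟨hp₁, hp₂⟩ := hp
  have hD₁pos : 0 < D₁ := hD₁ ▸ inv_pos.2 (Phi_sub_pos hσ₁ hU₁)
  have hD₂pos : 0 < D₂ := hD₂ ▸ inv_pos.2 (Phi_sub_pos hσ₂ hU₂)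
  set f₁ : ℝ → ℝ := tdens μ₁' σ₁ L₁ U₁ D₁ with hf₁def
  set f₂ : ℝ → ℝ := tdens μ₂' σ₂ L₂ U₂ D₂ with hf₂def
  set H : ℝ → ℝ := tcdf μ₂' σ₂ L₂ U₂ D₂ with hHdef
  have hf₁nn : ∀ x, 0 ≤ f₁ x := tdens_nonneg hD₁pos.le
  have hf₂nn : ∀ x, 0 ≤ f₂ x := tdens_nonneg hD₂pos.le
  have hHnn : ∀ s, 0 ≤ H s := tcdf_nonneg hD₂pos.le
  set C₂ : ℝ := ∫ y, f₂ y with hC₂def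
  have hHle : ∀ s, H s ≤ C₂ := tcdf_le hD₂pos.le
  have hlaw₁' : Measure.map X₁ ℙ
      = volume.withDensity (fun x => ENNReal.ofReal (f₁ x)) := hlaw₁
  have hlaw₂' : Measure.map X₂ ℙ
      = volume.withDensity (fun x => ENNReal.ofReal (f₂ x)) := hlaw₂
  haveI hprob₂ : IsProbabilityMeasure (Measure.map X₂ ℙ) :=
    Measure.isProbabilityMeasure_map hm₂.aemeasurable
  have hmap : Measure.map (fun ω => (X₁ ω, X₂ ω)) ℙ
      = (Measure.map X₁ ℙ).prod (Measure.map X₂ ℙ) :=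
    (indepFun_iff_map_prod_eq_prod_map_map hm₁.aemeasurable hm₂.aemeasurable).mp hindep
  have hmeasF : ∀ t : ℝ, AEStronglyMeasurable (fun x => f₁ x * H (t / x)) volume :=
    fun t => (tdens_meas.mul ((tcdf_cont hD₂pos.le).measurable.comp
      (measurable_const.div measurable_id))).aestronglyMeasurable
  have hFint : ∀ t : ℝ, Integrable (fun x => f₁ x * H (t / x)) := by
    intro t
    apply Integrable.mono' (tdens_int.mul_const C₂) (hmeasF t)
    filter_upwards with x
    rw [Real.norm_eq_abs, abs_of_nonneg (mul_nonneg (hf₁nn x) (hHnn _))]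
    exact mul_le_mul_of_nonneg_left (hHle _) (hf₁nn x)
  -- the CDF formula
  have key : ∀ t : ℝ, (ℙ {ω | X₁ ω * X₂ ω ≤ t}).toReal = ∫ x, f₁ x * H (t / x) := by
    intro t
    have hms : MeasurableSet {q : ℝ × ℝ | q.1 * q.2 ≤ t} :=
      measurableSet_le (measurable_fst.mul measurable_snd) measurable_const
    have h1 : ℙ {ω | X₁ ω * X₂ ω ≤ t}
        = ((Measure.map X₁ ℙ).prod (Measure.map X₂ ℙ)) {q : ℝ × ℝ | q.1 * q.2 ≤ t} := by
      rw [← hmap, Measure.map_apply (hm₁.prodMk hm₂) hms]; rfl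
    have hmeas₁ : Measurable (fun x => ENNReal.ofReal (f₁ x)) :=
      tdens_meas.ennreal_ofReal
    rw [h1, Measure.prod_apply hms, hlaw₁',
      lintegral_withDensity_eq_lintegral_mul_non_measurable _ hmeas₁
        (Filter.Eventually.of_forall fun x => ENNReal.ofReal_lt_top)]
    have h2 : ∀ x : ℝ,
        ((fun x => ENNReal.ofReal (f₁ x)) * fun x =>
          (Measure.map X₂ ℙ) (Prod.mk x ⁻¹' {q : ℝ × ℝ | q.1 * q.2 ≤ t})) x
        = ENNReal.ofReal (f₁ x * H (t / x)) := by
      intro x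
      simp only [Pi.mul_apply]
      by_cases hx : x ∈ Set.Icc L₁ U₁
      · have hx0 : 0 < x := lt_of_lt_of_le hL₁ hx.1
        have hpre : Prod.mk x ⁻¹' {q : ℝ × ℝ | q.1 * q.2 ≤ t} = Set.Iic (t / x) := by
          ext y
          simp only [Set.mem_preimage, Set.mem_setOf_eq, Set.mem_Iic]
          rw [le_div_iff₀ hx0, mul_comm]
        rw [hpre, hlaw₂', withDensity_apply _ measurableSet_Iic]
        have hH : ENNReal.ofReal (H (t / x))
            = ∫⁻ y in Set.Iic (t / x), ENNReal.ofReal (f₂ y) :=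
          ofReal_integral_eq_lintegral_ofReal tdens_int.restrict
            (Filter.Eventually.of_forall hf₂nn)
        rw [← hH, ← ENNReal.ofReal_mul (hf₁nn x)]
      · have h0 : f₁ x = 0 := Set.indicator_of_notMem hx _
        simp [h0]
    rw [lintegral_congr h2,
      ← ofReal_integral_eq_lintegral_ofReal (hFint t)
        (Filter.Eventually.of_forall fun x => mul_nonneg (hf₁nn x) (hHnn _)),
      ENNReal.toReal_ofReal (integral_nonneg fun x => mul_nonneg (hf₁nn x) (hHnn _))]
  -- endpoint facts
  have hU₂0 : 0 < U₂ := hL₂.trans hU₂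
  have hU₁0 : 0 < U₁ := hL₁.trans hU₁
  have hp0 : 0 < p := lt_of_lt_of_le (mul_pos hL₁ hL₂) hp₁
  have hA : α p = max L₁ (p / U₂) := by
    rw [hα p]
    rcases lt_or_ge p (L₁ * U₂) with h | h
    · rw [if_pos h, max_eq_left ((div_lt_iff₀ hU₂0).2 h).le]
    · rw [if_neg (not_lt.2 h), max_eq_right ((le_div_iff₀ hU₂0).2 h)]
  have hB : β p = min U₁ (p / L₂) := by
    rw [hβ p]
    rcases lt_or_ge p (U₁ * L₂) with h | h
    · rw [if_pos h, min_eq_right ((div_lt_iff₀ hL₂).2 h).le]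
    · rw [if_neg (not_lt.2 h), min_eq_left ((le_div_iff₀ hL₂).2 h)]
  have hAL : L₁ ≤ α p := hA ▸ le_max_left _ _
  have hBU : β p ≤ U₁ := hB ▸ min_le_left _ _
  have hAB : α p ≤ β p := by
    rw [hA, hB]
    apply max_le
    · exact le_min hU₁.le ((le_div_iff₀ hL₂).2 hp₁)
    · apply le_min ((div_le_iff₀ hU₂0).2 hp₂)
      apply div_le_div_of_nonneg_left hp0.le hL₂ hU₂.le
  -- the candidate derivative integrand
  set g : ℝ → ℝ := fun x => D₁ * phi μ₁' σ₁ x * (D₂ * phi μ₂' σ₂ (p / x)) / x with hgdef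
  set F' : ℝ → ℝ := (Set.Ioo (α p) (β p)).indicator g with hF'def
  have hF'meas : AEStronglyMeasurable F' volume := by
    apply Measurable.aestronglyMeasurable
    apply Measurable.indicator _ measurableSet_Ioo
    exact ((measurable_const.mul phi_meas).mul
      (measurable_const.mul (phi_meas.comp (measurable_const.div measurable_id)))).div
      measurable_id
  set M₂ : ℝ := D₂ * (Real.sqrt (2 * π * σ₂ ^ 2))⁻¹ with hM₂def
  have hM₂0 : 0 ≤ M₂ := by positivity
  have hHlip : LipschitzWith (Real.nnabs M₂) H := tcdf_lip hD₂pos.le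
  -- Lipschitz bound
  have hlip : ∀ᵐ x : ℝ, LipschitzOnWith (Real.nnabs (f₁ x * (M₂ / L₁)))
      (fun t => f₁ x * H (t / x)) (Metric.ball p 1) := by
    filter_upwards with x
    have hbnn : 0 ≤ f₁ x * (M₂ / L₁) := mul_nonneg (hf₁nn x) (by positivity)
    apply LipschitzOnWith.of_dist_le_mul
    intro t _ s _
    rw [Real.coe_nnabs, abs_of_nonneg hbnn]
    by_cases hx : x ∈ Set.Icc L₁ U₁
    · have hx0 : 0 < x := lt_of_lt_of_le hL₁ hx.1
      have hdd : dist (t / x) (s / x) = dist t s / x := by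
        rw [Real.dist_eq, Real.dist_eq, div_sub_div_same, abs_div, abs_of_pos hx0]
      have h1 : dist t s / x ≤ dist t s / L₁ :=
        div_le_div_of_nonneg_left dist_nonneg hL₁ hx.1
      calc dist (f₁ x * H (t / x)) (f₁ x * H (s / x))
          = f₁ x * dist (H (t / x)) (H (s / x)) := by
            rw [Real.dist_eq, Real.dist_eq, ← mul_sub, abs_mul, abs_of_nonneg (hf₁nn x)]
        _ ≤ f₁ x * (M₂ * (dist t s / L₁)) := by
            apply mul_le_mul_of_nonneg_left _ (hf₁nn x)
            calc dist (H (t / x)) (H (s / x)) ≤ |M₂| * dist (t / x) (s / x) :=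
                  hHlip.dist_le_mul _ _
              _ = M₂ * (dist t s / x) := by rw [abs_of_nonneg hM₂0, hdd]
              _ ≤ M₂ * (dist t s / L₁) := mul_le_mul_of_nonneg_left h1 hM₂0
        _ = f₁ x * (M₂ / L₁) * dist t s := by ring
    · have h0 : f₁ x = 0 := Set.indicator_of_notMem hx _
      simp only [h0, zero_mul, dist_self, zero_mul]
      positivity
  -- a.e. differentiability
  have hdiff : ∀ᵐ x : ℝ, HasDerivAt (fun t => f₁ x * H (t / x)) (F' x) p := by
    have hS : volume ({0, α p, β p, p / L₂, p / U₂, L₁, U₁} : Set ℝ) = 0 :=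
      Set.Countable.measure_zero (Set.toFinite _).countable _
    filter_upwards [measure_eq_zero_iff_ae_notMem.mp hS] with x hx
    simp only [Set.mem_insert_iff, Set.mem_singleton_iff, not_or] at hx
    obtain ⟨hx0, hxA, hxB, hxpL, hxpU, hxL1, hxU1⟩ := hx
    by_cases hmem : x ∈ Set.Icc L₁ U₁
    · have hxpos : 0 < x := lt_of_lt_of_le hL₁ hmem.1
      by_cases hio : x ∈ Set.Ioo (α p) (β p)
      · have hxltB : x < p / L₂ := lt_of_lt_of_le hio.2 (hB ▸ min_le_right _ _)
        have hxgtA : p / U₂ < x := lt_of_le_of_lt (hA ▸ le_max_right _ _) hio.1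
        have hL2lt : L₂ < p / x := by
          rw [lt_div_iff₀ hxpos]
          rw [lt_div_iff₀ hL₂] at hxltB
          linarith [hxltB]
        have hU2gt : p / x < U₂ := by
          rw [div_lt_iff₀ hxpos]
          rw [div_lt_iff₀ hU₂0] at hxgtA
          linarith [hxgtA]
        have hd2 : HasDerivAt H (f₂ (p / x)) (p / x) :=
          tcdf_deriv (ne_of_gt hL2lt) (ne_of_lt hU2gt)
        have hin : HasDerivAt (fun t : ℝ => t / x) x⁻¹ p := by
          simpa using (hasDerivAt_id p).div_const x
        have hcomp : HasDerivAt (fun t => H (t / x)) (f₂ (p / x) * x⁻¹) p := hd2.comp (h := fun t : ℝ => t / x) p hin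
        have hfin := hcomp.const_mul (f₁ x)
        refine hfin.congr_deriv (Eq.symm ?_)
        rw [hF'def, Set.indicator_of_mem hio, hgdef]
        have hf₁x : f₁ x = D₁ * phi μ₁' σ₁ x := Set.indicator_of_mem hmem _
        have hf₂x : f₂ (p / x) = D₂ * phi μ₂' σ₂ (p / x) :=
          Set.indicator_of_mem (Set.mem_Icc.mpr ⟨hL2lt.le, hU2gt.le⟩)
            (fun t => D₂ * phi μ₂' σ₂ t)
        rw [hf₁x, hf₂x]
        field_simp
      · have hF'0 : F' x = 0 := Set.indicator_of_notMem hio _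
        rw [hF'0]
        have hcase : x < α p ∨ β p < x := by
          simp only [Set.mem_Ioo, not_and, not_lt] at hio
          rcases lt_trichotomy x (α p) with h | h | h
          · exact Or.inl h
          · exact absurd h hxA
          · exact Or.inr (lt_of_le_of_ne (hio h) (Ne.symm hxB))
        have hcontdiv : ContinuousAt (fun t : ℝ => t / x) p :=
          (continuous_id.div_const x).continuousAt
        rcases hcase with h | h
        · have hlt : x < p / U₂ := by
            rcases lt_max_iff.mp (hA ▸ h) with h' | h'
            · exact absurd h' (not_lt.2 hmem.1)
            · exact h'
          have hgt : U₂ < p / x := by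
            rw [lt_div_iff₀ hxpos]
            rw [lt_div_iff₀ hU₂0] at hlt
            linarith [hlt]
          have hev : (fun t => f₁ x * H (t / x)) =ᶠ[nhds p] (fun _ => f₁ x * C₂) := by
            filter_upwards [hcontdiv.preimage_mem_nhds (Ioi_mem_nhds hgt)] with t ht
            rw [hHdef, tcdf_hi (le_of_lt ht), hC₂def]
          exact (hasDerivAt_const p _).congr_of_eventuallyEq hev
        · have hlt : p / L₂ < x := by
            rcases min_lt_iff.mp (hB ▸ h) with h' | h'
            · exact absurd h' (not_lt.2 hmem.2)
            · exact h'
          have hgt : p / x < L₂ := by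
            rw [div_lt_iff₀ hxpos]
            rw [div_lt_iff₀ hL₂] at hlt
            linarith [hlt]
          have hev : (fun t => f₁ x * H (t / x)) =ᶠ[nhds p] (fun _ => f₁ x * 0) := by
            filter_upwards [hcontdiv.preimage_mem_nhds (Iio_mem_nhds hgt)] with t ht
            rw [hHdef, tcdf_lo ht]
          exact (hasDerivAt_const p _).congr_of_eventuallyEq hev
    · have h0 : f₁ x = 0 := Set.indicator_of_notMem hmem _
      have hsub : x ∉ Set.Ioo (α p) (β p) := fun hio =>
        hmem ⟨le_trans hAL hio.1.le, le_trans hio.2.le hBU⟩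
      have hF'0 : F' x = 0 := Set.indicator_of_notMem hsub _
      rw [hF'0]
      have heq : (fun t => f₁ x * H (t / x)) = fun _ => (0 : ℝ) :=
        funext fun t => by rw [h0, zero_mul]
      rw [heq]
      exact hasDerivAt_const p 0
  have main := hasDerivAt_integral_of_dominated_loc_of_lip (Metric.ball_mem_nhds p one_pos)
    (Filter.Eventually.of_forall fun t => hmeasF t) (hFint p) hF'meas hlip
    (tdens_int.mul_const (M₂ / L₁)) hdiff
  have hAint : ∫ x, F' x
      = D₁ * D₂ * ∫ ζ in (α p)..(β p), phi μ₁' σ₁ ζ * phi μ₂' σ₂ (p / ζ) / ζ := by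
    rw [hF'def, MeasureTheory.integral_indicator measurableSet_Ioo,
      ← MeasureTheory.integral_Ioc_eq_integral_Ioo,
      ← intervalIntegral.integral_of_le hAB, ← intervalIntegral.integral_const_mul]
    apply intervalIntegral.integral_congr
    intro ζ _
    rw [hgdef]
    ring
  have final := main.2
  rw [hAint] at final
  exact final.congr_of_eventuallyEq (Filter.Eventually.of_forall fun t => key t)
end
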